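/- Let n ≥ 1 be an odd integer and let G be the fat fan of order n with base xyz, with apex y' and path vertices v_1, …, v_n. Let L be a list assignment with |L(y')| ≥ 5 and |L(v_i)| ≥ 3 for 1 ≤ i ≤ n. Then every precoloring of the base xyz extends to an L-coloring of G. -/
import Mathlib


/-- Vertices of the fat fan of order `n`: the base `x, y, z`, the apex `y'`,
and the path vertices `v 0, …, v (n-1)` (written `v_1, …, v_n` in the paper). -/
inductive FFVert (n : ℕ) : Type where
  | x | y | z | apex
  | v (i : Fin n)
deriving DecidableEq

/-- The fat fan of order `n` with base `x y z` and apex `y'`. -/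
def fatFan (n : ℕ) : SimpleGraph (FFVert n) :=
  SimpleGraph.fromEdgeSet (
    {s(FFVert.x, FFVert.y), s(FFVert.y, FFVert.z),
     s(FFVert.x, FFVert.apex), s(FFVert.y, FFVert.apex), s(FFVert.z, FFVert.apex)} ∪
    {e | ∃ i : Fin n, e = s(FFVert.apex, FFVert.v i)} ∪
    {e | ∃ i : Fin n, (i : ℕ) = 0 ∧ e = s(FFVert.x, FFVert.v i)} ∪
    {e | ∃ i j : Fin n, (i : ℕ) + 1 = (j : ℕ) ∧ e = s(FFVert.v i, FFVert.v j)} ∪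
    {e | ∃ i : Fin n, (i : ℕ) = n - 1 ∧ e = s(FFVert.v i, FFVert.z)})

/-- The precoloring of the base `x y z` by the colors `cx, cy, cz` extends to
an `L`-coloring of the fat fan of order `n`. -/
def ExtendsFF {n : ℕ} {α : Type*} (L : FFVert n → Finset α) (cx cy cz : α) : Prop :=
  ∃ ψ : FFVert n → α,
    (∀ u w : FFVert n, (fatFan n).Adj u w → ψ u ≠ ψ w) ∧
    ψ FFVert.x = cx ∧ ψ FFVert.y = cy ∧ ψ FFVert.z = cz ∧
    (∀ w : FFVert n, w ≠ FFVert.x → w ≠ FFVert.y → w ≠ FFVert.z → ψ w ∈ L w)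

/-- Path list-coloring dichotomy: either a proper coloring avoiding `p` at the start
and `q` at the end exists, or the lists form a rigid "chain". -/
lemma pathChain {α : Type*} [DecidableEq α] :
    ∀ n : ℕ, 1 ≤ n → ∀ S : ℕ → Finset α, (∀ i < n, 2 ≤ (S i).card) → ∀ p q : α,
    (∃ f : ℕ → α, (∀ i < n, f i ∈ S i) ∧ (∀ i, i + 1 < n → f i ≠ f (i + 1)) ∧
       f 0 ≠ p ∧ f (n - 1) ≠ q)
    ∨ (∃ b : ℕ → α, S 0 = {p, b 0} ∧
       (∀ i, i + 1 < n → S (i + 1) = {b i, b (i + 1)}) ∧ b (n - 1) = q) := by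
  intro n hn1
  induction n, hn1 using Nat.le_induction with
  | base =>
    intro S hS p q
    by_cases h : (S 0 \ {p, q}).Nonempty
    · obtain ⟨c, hc⟩ := h
      rw [Finset.mem_sdiff, Finset.mem_insert, Finset.mem_singleton] at hc
      push_neg at hc
      exact Or.inl ⟨fun _ => c, fun i hi => by interval_cases i; exact hc.1,
        fun i hi => by omega, hc.2.1, hc.2.2⟩
    · right
      refine ⟨fun _ => q, ?_, fun i hi => by omega, rfl⟩
      rw [Finset.not_nonempty_iff_eq_empty, Finset.sdiff_eq_empty_iff_subset] at h
      refine Finset.eq_of_subset_of_card_le h ?_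
      calc ({p, q} : Finset α).card ≤ 2 := Finset.card_insert_le _ _ |>.trans (by simp)
        _ ≤ (S 0).card := hS 0 (by omega)
  | succ n hn IH =>
    intro S hS p q
    have hSn : 2 ≤ (S n).card := hS n (by omega)
    by_cases hbig : 2 ≤ (S n \ {q}).card
    · rcases IH S (fun i hi => hS i (by omega)) p q with ⟨f, hf1, hf2, hf3, hf4⟩ | ⟨b, hb1, hb2, hb3⟩
      · have hne : ((S n \ {q}) \ {f (n - 1)}).Nonempty := by
          rw [← Finset.card_pos]
          have h1 := Finset.le_card_sdiff ({f (n-1)} : Finset α) (S n \ {q})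
          simp only [Finset.card_singleton] at h1
          omega
        obtain ⟨c, hc⟩ := hne
        rw [Finset.mem_sdiff, Finset.mem_sdiff, Finset.mem_singleton, Finset.mem_singleton] at hc
        refine Or.inl ⟨fun i => if i = n then c else f i, ?_, ?_, ?_, ?_⟩
        · intro i hi
          by_cases h : i = n
          · simp [h, hc.1.1]
          · simp only [if_neg h]; exact hf1 i (by omega)
        · intro i hi
          by_cases h : i + 1 = n
          · have hi' : i ≠ n := by omega
            simp only [if_neg hi', if_pos h]
            have : i = n - 1 := by omega
            rw [this]; exact fun he => hc.2 he.symm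
          · have hi' : i ≠ n := by omega
            simp only [if_neg hi', if_neg h]
            exact hf2 i (by omega)
        · have : (0 : ℕ) ≠ n := by omega
          simpa [this] using hf3
        · simpa using hc.1.2
      · -- the chain itself is a coloring ending at q; extend with c ∈ S n \ {q}
        have hne : (S n \ {q}).Nonempty := by rw [← Finset.card_pos]; omega
        obtain ⟨c, hc⟩ := hne
        rw [Finset.mem_sdiff, Finset.mem_singleton] at hc
        have hbmem : ∀ i < n, b i ∈ S i := by
          intro i hi
          cases i with
          | zero => rw [hb1]; simp
          | succ j => rw [hb2 j hi]; simp
        refine Or.inl ⟨fun i => if i = n then c else b i, ?_, ?_, ?_, ?_⟩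
        · intro i hi
          by_cases h : i = n
          · simp [h, hc.1]
          · simp only [if_neg h]; exact hbmem i (by omega)
        · intro i hi
          by_cases h : i + 1 = n
          · have hi' : i ≠ n := by omega
            simp only [if_neg hi', if_pos h]
            have : i = n - 1 := by omega
            rw [this, hb3]; exact fun he => hc.2 he.symm
          · have hi' : i ≠ n := by omega
            simp only [if_neg hi', if_neg h]
            intro he
            have hcard := hS (i + 1) (by omega)
            rw [hb2 i (by omega)] at hcard
            rw [he] at hcard
            simp at hcard
        · have h0 : (0 : ℕ) ≠ n := by omega
          simp only [if_neg h0]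
          intro he
          have hcard := hS 0 (by omega)
          rw [hb1, ← he] at hcard
          simp at hcard
        · simpa using hc.2
    · -- S n = {q, r}
      have hqmem : q ∈ S n := by
        by_contra hq
        rw [Finset.sdiff_eq_self_of_disjoint (by simpa using hq)] at hbig
        omega
      have hne : (S n \ {q}).Nonempty := by
        rw [← Finset.card_pos]
        have := Finset.le_card_sdiff ({q} : Finset α) (S n)
        simp only [Finset.card_singleton] at this
        omega
      obtain ⟨r, hr⟩ := hne
      rw [Finset.mem_sdiff, Finset.mem_singleton] at hr
      have hSeq : S n = {q, r} := by
        apply Finset.eq_of_subset_of_card_le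
        · intro c hcm
          rw [Finset.mem_insert, Finset.mem_singleton]
          by_cases h : c = q
          · exact Or.inl h
          · right
            by_contra hcr
            have h2 : ({c, r} : Finset α) ⊆ S n \ {q} := by
              intro d hd
              rw [Finset.mem_insert, Finset.mem_singleton] at hd
              rcases hd with rfl | rfl
              · rw [Finset.mem_sdiff, Finset.mem_singleton]; exact ⟨hcm, h⟩
              · rw [Finset.mem_sdiff, Finset.mem_singleton]; exact ⟨hr.1, hr.2⟩
            have := Finset.card_le_card h2
            rw [Finset.card_insert_of_notMem (by simpa using hcr), Finset.card_singleton] at this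
            omega
        · calc ({q, r} : Finset α).card ≤ 2 := Finset.card_insert_le _ _ |>.trans (by simp)
            _ ≤ (S n).card := hSn
      rcases IH S (fun i hi => hS i (by omega)) p r with ⟨f, hf1, hf2, hf3, hf4⟩ | ⟨b, hb1, hb2, hb3⟩
      · refine Or.inl ⟨fun i => if i = n then r else f i, ?_, ?_, ?_, ?_⟩
        · intro i hi
          by_cases h : i = n
          · simp [h, hr.1]
          · simp only [if_neg h]; exact hf1 i (by omega)
        · intro i hi
          by_cases h : i + 1 = n
          · have hi' : i ≠ n := by omega
            simp only [if_neg hi', if_pos h]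
            have : i = n - 1 := by omega
            rw [this]; exact hf4
          · have hi' : i ≠ n := by omega
            simp only [if_neg hi', if_neg h]
            exact hf2 i (by omega)
        · have : (0 : ℕ) ≠ n := by omega
          simpa [this] using hf3
        · simpa using fun he => hr.2 he
      · refine Or.inr ⟨fun i => if i = n then q else b i, ?_, ?_, ?_⟩
        · have : (0 : ℕ) ≠ n := by omega
          simpa [this] using hb1
        · intro i hi
          by_cases h : i + 1 = n
          · have hi' : i ≠ n := by omega
            simp only [if_neg hi', if_pos h]
            have hieq : i = n - 1 := by omega
            rw [h, hSeq, hieq, hb3, Finset.pair_comm]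
          · have hi' : i ≠ n := by omega
            simp only [if_neg hi', if_neg h]
            exact hb2 i (by omega)
        · simp

lemma pathTwo {α : Type*} [DecidableEq α] (n : ℕ) (hn : 1 ≤ n) (hodd : Odd n)
    (T : ℕ → Finset α) (hT : ∀ i < n, 3 ≤ (T i).card)
    (a a' cx cz : α) (haa : a ≠ a') (hax : a ≠ cx) (haz : a ≠ cz)
    (hax' : a' ≠ cx) (haz' : a' ≠ cz) :
    ∃ (c : α) (f : ℕ → α), (c = a ∨ c = a') ∧ (∀ i < n, f i ∈ T i ∧ f i ≠ c) ∧
      (∀ i, i + 1 < n → f i ≠ f (i + 1)) ∧ f 0 ≠ cx ∧ f (n - 1) ≠ cz := by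
  have hcard : ∀ (e : α), ∀ i < n, 2 ≤ ((fun j => T j \ {e}) i).card := by
    intro e i hi
    show 2 ≤ (T i \ {e}).card
    have h1 := Finset.le_card_sdiff ({e} : Finset α) (T i)
    have h2 := hT i hi
    simp only [Finset.card_singleton] at h1
    omega
  have mem_of : ∀ (e u v : α), ∀ i < n, T i \ {e} = {u, v} → e ∈ T i := by
    intro e u v i hi heq
    by_contra he
    rw [Finset.sdiff_eq_self_of_disjoint (by simpa using he)] at heq
    have h2 := hT i hi
    rw [heq] at h2
    have h3 : ({u, v} : Finset α).card ≤ 2 :=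
      (Finset.card_insert_le _ _).trans (by simp)
    omega
  rcases pathChain n hn (fun j => T j \ {a}) (hcard a) cx cz with
    ⟨f, hf1, hf2, hf3, hf4⟩ | ⟨b, hb1, hb2, hb3⟩
  · refine ⟨a, f, Or.inl rfl, ?_, hf2, hf3, hf4⟩
    intro i hi
    have h := hf1 i hi
    rw [Finset.mem_sdiff, Finset.mem_singleton] at h
    exact h
  rcases pathChain n hn (fun j => T j \ {a'}) (hcard a') cx cz with
    ⟨f, hf1, hf2, hf3, hf4⟩ | ⟨b', hb1', hb2', hb3'⟩
  · refine ⟨a', f, Or.inr rfl, ?_, hf2, hf3, hf4⟩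
    intro i hi
    have h := hf1 i hi
    rw [Finset.mem_sdiff, Finset.mem_singleton] at h
    exact h
  exfalso
  have key : ∀ i, i < n →
      (i % 2 = 0 → b i = a' ∧ b' i = a) ∧
      (i % 2 = 1 → b i = b' i ∧ b i ≠ a ∧ b i ≠ a') := by
    intro i
    induction i with
    | zero =>
      intro _
      refine ⟨fun _ => ?_, fun h => by omega⟩
      constructor
      · have ha'T : a' ∈ T 0 := mem_of a' cx (b' 0) 0 (by omega) hb1'
        have : a' ∈ T 0 \ {a} := by
          rw [Finset.mem_sdiff, Finset.mem_singleton]; exact ⟨ha'T, fun h => haa h.symm⟩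
        rw [hb1, Finset.mem_insert, Finset.mem_singleton] at this
        rcases this with h | h
        · exact absurd h hax'
        · exact h.symm
      · have haT : a ∈ T 0 := mem_of a cx (b 0) 0 (by omega) hb1
        have : a ∈ T 0 \ {a'} := by
          rw [Finset.mem_sdiff, Finset.mem_singleton]; exact ⟨haT, haa⟩
        rw [hb1', Finset.mem_insert, Finset.mem_singleton] at this
        rcases this with h | h
        · exact absurd h hax
        · exact h.symm
    | succ i ih =>
      intro hi
      have hi' : i < n := by omega
      have heq := hb2 i hi
      have heq' := hb2' i hi
      have hmem : b (i + 1) ∈ T (i + 1) ∧ b (i + 1) ≠ a := by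
        have : b (i + 1) ∈ T (i + 1) \ {a} := by rw [heq]; simp
        rw [Finset.mem_sdiff, Finset.mem_singleton] at this; exact this
      have hmem' : b' (i + 1) ∈ T (i + 1) ∧ b' (i + 1) ≠ a' := by
        have : b' (i + 1) ∈ T (i + 1) \ {a'} := by rw [heq']; simp
        rw [Finset.mem_sdiff, Finset.mem_singleton] at this; exact this
      have hd : b i ≠ b (i + 1) := by
        intro h
        have h2 : 2 ≤ (T (i+1) \ {a}).card := hcard a (i + 1) hi
        rw [heq, h] at h2
        simp at h2
      have hd' : b' i ≠ b' (i + 1) := by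
        intro h
        have h2 : 2 ≤ (T (i+1) \ {a'}).card := hcard a' (i + 1) hi
        rw [heq', h] at h2
        simp at h2
      rcases Nat.even_or_odd i with he | ho
      · -- i even, i+1 odd
        have hie : i % 2 = 0 := Nat.even_iff.mp he
        obtain ⟨hba, hb'a⟩ := (ih hi').1 hie
        refine ⟨fun h => by omega, fun _ => ?_⟩
        have hne' : b (i + 1) ≠ a' := by rw [← hba]; exact fun h => hd h.symm
        refine ⟨?_, hmem.2, hne'⟩
        have : b (i + 1) ∈ T (i + 1) \ {a'} := by
          rw [Finset.mem_sdiff, Finset.mem_singleton]; exact ⟨hmem.1, hne'⟩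
        rw [heq', hb'a, Finset.mem_insert, Finset.mem_singleton] at this
        rcases this with h | h
        · exact absurd h hmem.2
        · exact h
      · -- i odd, i+1 even
        have hio : i % 2 = 1 := Nat.odd_iff.mp ho
        obtain ⟨hbb, hbna, hbna'⟩ := (ih hi').2 hio
        refine ⟨fun _ => ?_, fun h => by omega⟩
        constructor
        · have ha'T : a' ∈ T (i + 1) := mem_of a' (b' i) (b' (i + 1)) (i + 1) hi heq'
          have : a' ∈ T (i + 1) \ {a} := by
            rw [Finset.mem_sdiff, Finset.mem_singleton]; exact ⟨ha'T, fun h => haa h.symm⟩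
          rw [heq, Finset.mem_insert, Finset.mem_singleton] at this
          rcases this with h | h
          · exact absurd h.symm hbna'
          · exact h.symm
        · have haT : a ∈ T (i + 1) := mem_of a (b i) (b (i + 1)) (i + 1) hi heq
          have : a ∈ T (i + 1) \ {a'} := by
            rw [Finset.mem_sdiff, Finset.mem_singleton]; exact ⟨haT, haa⟩
          rw [heq', ← hbb, Finset.mem_insert, Finset.mem_singleton] at this
          rcases this with h | h
          · exact absurd h.symm hbna
          · exact h.symm
  have hpar : (n - 1) % 2 = 0 := by
    obtain ⟨k, hk⟩ := hodd
    omega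
  have := ((key (n - 1) (by omega)).1 hpar).1
  rw [hb3] at this
  exact haz' this.symm

/-- Every precoloring of the base of a fat fan of odd order extends. -/
theorem fatFan_odd_extends {n : ℕ} {α : Type*}
    (hn : 1 ≤ n) (hodd : Odd n) (L : FFVert n → Finset α)
    (hapex : 5 ≤ (L FFVert.apex).card)
    (hlist : ∀ i : Fin n, 3 ≤ (L (FFVert.v i)).card)
    (cx cy cz : α) (hxy : cx ≠ cy) (hyz : cy ≠ cz) :
    ExtendsFF L cx cy cz := by
  classical
  -- two candidate apex colors
  have hA : 1 < (L FFVert.apex \ {cx, cy, cz}).card := by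
    have h1 := Finset.le_card_sdiff ({cx, cy, cz} : Finset α) (L FFVert.apex)
    have h2 : ({cx, cy, cz} : Finset α).card ≤ 3 :=
      (Finset.card_insert_le _ _).trans (by
        exact Nat.succ_le_succ ((Finset.card_insert_le _ _).trans (by simp)))
    omega
  obtain ⟨a, ha, a', ha', haa⟩ := Finset.one_lt_card.mp hA
  rw [Finset.mem_sdiff, Finset.mem_insert, Finset.mem_insert, Finset.mem_singleton] at ha ha'
  push_neg at ha ha'
  obtain ⟨haL, hax, hay, haz⟩ := ha
  obtain ⟨haL', hax', hay', haz'⟩ := ha'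
  obtain ⟨c, f, hc, hmem, hadj, h0, hlast⟩ :=
    pathTwo n hn hodd (fun i => if h : i < n then L (FFVert.v ⟨i, h⟩) else ∅)
      (fun i hi => by show 3 ≤ (if h : i < n then L (FFVert.v ⟨i, h⟩) else ∅).card; rw [dif_pos hi]; exact hlist _)
      a a' cx cz haa hax haz hax' haz'
  have hcL : c ∈ L FFVert.apex := by rcases hc with rfl | rfl <;> assumption
  have hcx : c ≠ cx := by rcases hc with rfl | rfl <;> assumption
  have hcy : c ≠ cy := by rcases hc with rfl | rfl <;> assumption
  have hcz : c ≠ cz := by rcases hc with rfl | rfl <;> assumption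
  refine ⟨fun w => match w with
    | FFVert.x => cx | FFVert.y => cy | FFVert.z => cz
    | FFVert.apex => c | FFVert.v i => f i, ?_, rfl, rfl, rfl, ?_⟩
  · intro u w h
    rw [fatFan, SimpleGraph.fromEdgeSet_adj] at h
    obtain ⟨hm, hne⟩ := h
    simp only [Set.mem_union, Set.mem_insert_iff, Set.mem_setOf_eq,
      Set.mem_singleton_iff] at hm
    rcases hm with ((((h1 | h2 | h3 | h4 | h5) | ⟨i, hi⟩) | ⟨i, hi0, hi⟩) |
        ⟨i, j, hij, hi⟩) | ⟨i, hin, hi⟩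
    · rcases Sym2.eq_iff.mp h1 with ⟨rfl, rfl⟩ | ⟨rfl, rfl⟩
      · exact hxy
      · exact hxy.symm
    · rcases Sym2.eq_iff.mp h2 with ⟨rfl, rfl⟩ | ⟨rfl, rfl⟩
      · exact hyz
      · exact hyz.symm
    · rcases Sym2.eq_iff.mp h3 with ⟨rfl, rfl⟩ | ⟨rfl, rfl⟩
      · exact fun he => hcx he.symm
      · exact hcx
    · rcases Sym2.eq_iff.mp h4 with ⟨rfl, rfl⟩ | ⟨rfl, rfl⟩
      · exact fun he => hcy he.symm
      · exact hcy
    · rcases Sym2.eq_iff.mp h5 with ⟨rfl, rfl⟩ | ⟨rfl, rfl⟩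
      · exact fun he => hcz he.symm
      · exact hcz
    · rcases Sym2.eq_iff.mp hi with ⟨rfl, rfl⟩ | ⟨rfl, rfl⟩
      · exact fun he => (hmem (i : ℕ) i.isLt).2 he.symm
      · exact (hmem (i : ℕ) i.isLt).2
    · rcases Sym2.eq_iff.mp hi with ⟨rfl, rfl⟩ | ⟨rfl, rfl⟩
      · show cx ≠ f (i : ℕ)
        rw [hi0]; exact h0.symm
      · show f (i : ℕ) ≠ cx
        rw [hi0]; exact h0
    · rcases Sym2.eq_iff.mp hi with ⟨rfl, rfl⟩ | ⟨rfl, rfl⟩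
      · show f (i : ℕ) ≠ f (j : ℕ)
        have := hadj (i : ℕ) (by rw [hij]; exact j.isLt)
        rwa [hij] at this
      · show f (j : ℕ) ≠ f (i : ℕ)
        have := hadj (i : ℕ) (by rw [hij]; exact j.isLt)
        rw [hij] at this
        exact this.symm
    · rcases Sym2.eq_iff.mp hi with ⟨rfl, rfl⟩ | ⟨rfl, rfl⟩
      · show f (i : ℕ) ≠ cz
        rw [hin]; exact hlast
      · show cz ≠ f (i : ℕ)
        rw [hin]; exact hlast.symm
  · intro w hw1 hw2 hw3
    match w with
    | FFVert.x => exact absurd rfl hw1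
    | FFVert.y => exact absurd rfl hw2
    | FFVert.z => exact absurd rfl hw3
    | FFVert.apex => exact hcL
    | FFVert.v i =>
      have h := (hmem (i : ℕ) i.isLt).1
      simp only [dif_pos i.isLt] at h
      exact h
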